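/- Let G and Ĝ be two DAGs on the same vertex set with the same adjacencies (same skeleton). If G and Ĝ have the same set of v-structures (unshielded colliders), then they are Markov equivalent, i.e. the d-separation relations of G and Ĝ coincide. -/

import Mathlib

namespace Stmt10

variable {V : Type*}

/-- `x` and `y` are adjacent in the directed graph `G` (edge in either direction):
the skeleton relation. -/
def Adj (G : V → V → Prop) (x y : V) : Prop := G x y ∨ G y x

/-- `G` is a directed acyclic graph: no nontrivial directed cycle. -/
def IsDAG (G : V → V → Prop) : Prop := ∀ x : V, ¬ Relation.TransGen G x x

/-- `l` is an (undirected, self-avoiding) path from `x` to `y` in the skeleton of `G`. -/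
def IsPath (G : V → V → Prop) (x y : V) (l : List V) : Prop :=
  l.head? = some x ∧ l.getLast? = some y ∧ l.Chain' (Adj G) ∧ l.Nodup

/-- `w` is a collider on a path, between its predecessor `a` and successor `b`. -/
def Collider (G : V → V → Prop) (a w b : V) : Prop := G a w ∧ G b w

/-- The path `l` is blocked by the conditioning set `Z`: some interior vertex `w` of
`l` is either a non-collider belonging to `Z`, or a collider none of whose descendants
(including itself) belongs to `Z`. -/
def Blocked (G : V → V → Prop) (Z : Set V) (l : List V) : Prop :=
  ∃ (a w b : V) (l₁ l₂ : List V), l = l₁ ++ [a, w, b] ++ l₂ ∧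
    ((¬ Collider G a w b ∧ w ∈ Z) ∨
     (Collider G a w b ∧ ∀ v : V, Relation.ReflTransGen G w v → v ∉ Z))

/-- `x` and `y` are d-separated by `Z` in `G`: every path between them is blocked. -/
def DSep (G : V → V → Prop) (Z : Set V) (x y : V) : Prop :=
  ∀ l : List V, IsPath G x y l → Blocked G Z l

/-- `(a, b, c)` is a v-structure (unshielded collider) in `G`. -/
def VStruct (G : V → V → Prop) (a b c : V) : Prop :=
  G a b ∧ G c b ∧ a ≠ c ∧ ¬ Adj G a c

section Aux

variable {G G' : V → V → Prop} {Z : Set V}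

/-- `w` has a descendant (possibly itself) in `Z`. -/
def AnZ (G : V → V → Prop) (Z : Set V) (w : V) : Prop :=
  ∃ v, Relation.ReflTransGen G w v ∧ v ∈ Z

/-- The triple `(a, w, b)` is unblocked. -/
def OkT (G : V → V → Prop) (Z : Set V) (a w b : V) : Prop :=
  (Collider G a w b → AnZ G Z w) ∧ (¬ Collider G a w b → w ∉ Z)

/-- `[a,w,b]` occurs consecutively in `l`. -/
def Trip (l : List V) (a w b : V) : Prop := ∃ l₁ l₂ : List V, l = l₁ ++ [a, w, b] ++ l₂

def Ok3 (G : V → V → Prop) (Z : Set V) (l : List V) : Prop :=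
  ∀ a w b, Trip l a w b → OkT G Z a w b

/-- An active walk from `x` to `y` given `Z`. -/
def AWalk (G : V → V → Prop) (Z : Set V) (x y : V) (l : List V) : Prop :=
  l.head? = some x ∧ l.getLast? = some y ∧ l.Chain' (Adj G) ∧ Ok3 G Z l

lemma IsDAG.irrefl (hG : IsDAG G) {a : V} : ¬ G a a :=
  fun h => hG a (Relation.TransGen.single h)

lemma IsDAG.not2 (hG : IsDAG G) {a b : V} (h : G a b) : ¬ G b a :=
  fun h' => hG a (Relation.TransGen.head h (Relation.TransGen.single h'))

lemma IsDAG.not3 (hG : IsDAG G) {a b c : V} (h : G a b) (h' : G b c) : ¬ G c a :=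
  fun h'' => hG a (Relation.TransGen.head h
    (Relation.TransGen.head h' (Relation.TransGen.single h'')))

lemma Adj.symm {x y : V} (h : Adj G x y) : Adj G y x := h.elim .inr .inl

lemma adj_of_G {x y : V} (h : G x y) : Adj G x y := .inl h

/-- direction dichotomy -/
lemma dir_of_adj {x y : V} (h : Adj G x y) (h' : ¬ G x y) : G y x := h.resolve_left h'

lemma okt_symm {a w b : V} (h : OkT G Z a w b) : OkT G Z b w a := by
  have hc : Collider G b w a ↔ Collider G a w b := by unfold Collider; tauto
  exact ⟨fun h1 => h.1 (hc.mp h1), fun h1 => h.2 (fun h2 => h1 (hc.mpr h2))⟩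

/-- characterization of triples in an append -/
lemma trip_append_iff {P Q : List V} {x u y : V} :
    Trip (P ++ Q) x u y ↔ Trip P x u y ∨ Trip Q x u y ∨
      (∃ P', P = P' ++ [x, u] ∧ ∃ Q', Q = y :: Q') ∨
      (∃ P', P = P' ++ [x] ∧ ∃ Q', Q = u :: y :: Q') := by
  constructor
  · rintro ⟨l₁, l₂, h⟩
    rw [List.append_assoc] at h
    rcases List.append_eq_append_iff.mp h with ⟨a', ha1, ha2⟩ | ⟨c', hc1, hc2⟩
    · right; left; exact ⟨a', l₂, by rw [ha2, List.append_assoc]⟩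
    · -- P = l₁ ++ c', [x,u,y] ++ l₂ = c' ++ Q
      match c', hc2 with
      | [], hc2 => right; left; exact ⟨[], l₂, by simpa using hc2.symm⟩
      | [c1], hc2 =>
        simp only [List.cons_append, List.nil_append, List.cons.injEq] at hc2
        obtain ⟨h1, h2⟩ := hc2
        right; right; right
        exact ⟨l₁, by rw [hc1, h1], l₂, h2.symm⟩
      | [c1, c2], hc2 =>
        simp only [List.cons_append, List.nil_append, List.cons.injEq] at hc2
        obtain ⟨h1, h2, h3⟩ := hc2
        right; right; left
        exact ⟨l₁, by rw [hc1, h1, h2], l₂, h3.symm⟩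
      | c1 :: c2 :: c3 :: c', hc2 =>
        simp only [List.cons_append, List.nil_append, List.cons.injEq] at hc2
        obtain ⟨h1, h2, h3, h4⟩ := hc2
        left
        exact ⟨l₁, c', by rw [hc1, h1, h2, h3]; simp⟩
  · rintro (⟨l₁, l₂, h⟩ | ⟨l₁, l₂, h⟩ | ⟨P', hP, Q', hQ⟩ | ⟨P', hP, Q', hQ⟩)
    · exact ⟨l₁, l₂ ++ Q, by rw [h]; simp⟩
    · exact ⟨P ++ l₁, l₂, by rw [h]; simp⟩
    · exact ⟨P', Q', by rw [hP, hQ]; simp⟩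
    · exact ⟨P', Q', by rw [hP, hQ]; simp⟩

lemma trip_cons_iff {v : V} {Q : List V} {x u y : V} :
    Trip (v :: Q) x u y ↔ Trip Q x u y ∨ (v = x ∧ ∃ Q', Q = u :: y :: Q') := by
  have := trip_append_iff (P := [v]) (Q := Q) (x := x) (u := u) (y := y)
  simp only [List.singleton_append] at this
  rw [this]
  constructor
  · rintro (⟨l₁, l₂, h⟩ | h | ⟨P', hP, Q', hQ⟩ | ⟨P', hP, Q', hQ⟩)
    · exact absurd (congrArg List.length h) (by simp; omega)
    · exact Or.inl h
    · exact absurd (congrArg List.length hP) (by simp)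
    · right
      have : P' = [] := by
        have h' := congrArg List.length hP; simp at h'
        exact h'
      subst this; simp at hP
      exact ⟨hP.symm ▸ rfl, Q', hQ⟩
  · rintro (h | ⟨rfl, Q', hQ⟩)
    · exact Or.inr (Or.inl h)
    · exact Or.inr (Or.inr (Or.inr ⟨[], by simp, Q', hQ⟩))


lemma trip_length {l : List V} {a w b : V} (h : Trip l a w b) : 3 ≤ l.length := by
  obtain ⟨l₁, l₂, rfl⟩ := h; simp; omega

lemma trip_triple_iff {p q r x u y : V} :
    Trip ([p, q, r] : List V) x u y ↔ x = p ∧ u = q ∧ y = r := by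
  constructor
  · rintro ⟨l₁, l₂, h⟩
    have hl : l₁.length + 3 + l₂.length = 3 := by
      have := congrArg List.length h; simp at this; omega
    have h1 : l₁ = [] := List.eq_nil_of_length_eq_zero (by omega)
    have h2 : l₂ = [] := List.eq_nil_of_length_eq_zero (by omega)
    subst h1; subst h2; simp at h
    exact ⟨h.1.symm, h.2.1.symm, h.2.2.symm⟩
  · rintro ⟨rfl, rfl, rfl⟩; exact ⟨[], [], by simp⟩

lemma ok3_append_left {P Q : List V} (h : Ok3 G Z (P ++ Q)) : Ok3 G Z P :=
  fun a w b ht => h a w b (trip_append_iff.mpr (Or.inl ht))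

lemma ok3_append_right {P Q : List V} (h : Ok3 G Z (P ++ Q)) : Ok3 G Z Q :=
  fun a w b ht => h a w b (trip_append_iff.mpr (Or.inr (Or.inl ht)))

lemma ok3_cons {v : V} {l : List V} (h : Ok3 G Z (v :: l)) : Ok3 G Z l :=
  fun a w b ht => h a w b (trip_cons_iff.mpr (Or.inl ht))

lemma trip_reverse_of {l : List V} {a w b : V} (h : Trip l a w b) :
    Trip l.reverse b w a := by
  obtain ⟨l₁, l₂, rfl⟩ := h
  exact ⟨l₂.reverse, l₁.reverse, by simp⟩

lemma ok3_reverse {l : List V} (h : Ok3 G Z l) : Ok3 G Z l.reverse := by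
  intro a w b ht
  have := trip_reverse_of ht
  rw [List.reverse_reverse] at this
  exact okt_symm (h b w a this)

lemma awalk_reverse {x y : V} {l : List V} (h : AWalk G Z x y l) :
    AWalk G Z y x l.reverse := by
  obtain ⟨h1, h2, h3, h4⟩ := h
  refine ⟨?_, ?_, ?_, ok3_reverse h4⟩
  · rw [List.head?_reverse]; exact h2
  · rw [List.getLast?_reverse]; exact h1
  · refine List.isChain_reverse.mpr ?_
    exact List.IsChain.imp (fun a b hab => Adj.symm hab) h3

lemma chain_transGen {L : List V} {u v : V} (hc : List.Chain G u L) (hv : v ∈ L) :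
    Relation.TransGen G u v := by
  induction L generalizing u with
  | nil => simp at hv
  | cons m T ih =>
    rw [show List.Chain G u (m :: T) ↔ G u m ∧ List.Chain G m T from List.isChain_cons_cons] at hc
    rcases List.mem_cons.mp hv with rfl | hv
    · exact Relation.TransGen.single hc.1
    · exact Relation.TransGen.head hc.1 (ih hc.2 hv)

lemma anZ_step {u m : V} (h : G u m) (hm : AnZ G Z m) : AnZ G Z u :=
  ⟨hm.choose, Relation.ReflTransGen.head h hm.choose_spec.1, hm.choose_spec.2⟩

/-- the "run" lemma: a walk leaving `u` along a directed edge either certifies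
`u ∈ An(Z)` or continues as a directed chain to the very end. -/
lemma run (hG : IsDAG G) : ∀ (T : List V) (u m : V), Ok3 G Z (u :: m :: T) →
    List.Chain' (Adj G) (u :: m :: T) → G u m →
    AnZ G Z u ∨ List.Chain G u (m :: T) := by
  intro T
  induction T with
  | nil => intro u m _ _ hum; exact Or.inr (List.Chain.cons hum List.Chain.nil)
  | cons m' T' ih =>
    intro u m hok hch hum
    by_cases hmm : G m' m
    · -- collider at m
      have hcoll : Collider G u m m' := ⟨hum, hmm⟩
      have := (hok u m m' ⟨[], T', by simp⟩).1 hcoll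
      exact Or.inl (anZ_step hum this)
    · have hadj : Adj G m m' := (List.isChain_cons_cons.mp (List.isChain_cons_cons.mp hch).2).1
      have hmm' : G m m' := hadj.resolve_right hmm
      rcases ih m m' (ok3_cons hok) hch.tail hmm' with h | h
      · exact Or.inl (anZ_step hum h)
      · exact Or.inr (List.Chain.cons hum h)


lemma head?_mid (A : List V) (v : V) (Q R : List V) :
    (A ++ v :: Q).head? = (A ++ v :: R).head? := by cases A <;> simp

lemma getLast?_mid (B : List V) (v : V) (P Q : List V) :
    (P ++ (v :: B)).getLast? = (Q ++ (v :: B)).getLast? := by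
  rw [List.getLast?_append, List.getLast?_append]
  cases h : (v :: B).getLast? with
  | none => simp [List.getLast?_eq_none_iff] at h
  | some z => simp

lemma not_nodup_decomp : ∀ (l : List V), ¬ l.Nodup →
    ∃ (A : List V) (u : V) (M B : List V), l = A ++ u :: (M ++ u :: B) := by
  intro l
  induction l with
  | nil => intro h; exact absurd List.nodup_nil h
  | cons v l ih =>
    intro h
    by_cases hv : v ∈ l
    · obtain ⟨s, t, rfl⟩ := List.append_of_mem hv
      exact ⟨[], v, s, t, by simp⟩
    · have : ¬ l.Nodup := fun hn => h (List.nodup_cons.mpr ⟨hv, hn⟩)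
      obtain ⟨A, u, M, B, rfl⟩ := ih this
      exact ⟨v :: A, u, M, B, by simp⟩

/-- removing a loop from an active walk. -/
lemma dup_shortcut (hG : IsDAG G) {x y u : V} {A M B : List V}
    (hW : AWalk G Z x y (A ++ u :: (M ++ u :: B))) :
    ∃ l', AWalk G Z x y l' ∧ l'.length < (A ++ u :: (M ++ u :: B)).length := by
  obtain ⟨h1, h2, h3, h4⟩ := hW
  -- M is nonempty
  obtain ⟨m1, M', rfl⟩ : ∃ m1 M', M = m1 :: M' := by
    cases M with
    | nil =>
      exfalso
      have hc : List.Chain' (Adj G) [u, u] :=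
        h3.infix ⟨A, B, by simp⟩
      have : Adj G u u := (List.isChain_cons_cons.mp hc).1
      exact hG.irrefl (this.elim id id)
    | cons m1 M' => exact ⟨m1, M', rfl⟩
  have hsufc : List.Chain' (Adj G) (u :: (m1 :: M' ++ u :: B)) :=
    (List.isChain_append.mp (show List.Chain' (Adj G)
      (A ++ (u :: (m1 :: M' ++ u :: B))) by simpa using h3)).2.1
  refine ⟨A ++ u :: B, ⟨?_, ?_, ?_, ?_⟩, by simp; omega⟩
  · rw [head?_mid A u B (m1 :: M' ++ u :: B)]; exact h1
  · rw [show A ++ u :: B = A ++ (u :: B) by simp,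
      getLast?_mid B u A (A ++ u :: (m1 :: M'))]
    rw [show (A ++ u :: (m1 :: M')) ++ (u :: B) = A ++ u :: (m1 :: M' ++ u :: B) by simp]
    exact h2
  · -- chain'
    have d1 := List.isChain_append.mp (show List.Chain' (Adj G)
      (A ++ (u :: (m1 :: M' ++ u :: B))) by simpa using h3)
    have cuB : List.Chain' (Adj G) (u :: B) := by
      have t1 : List.Chain' (Adj G) (m1 :: M' ++ u :: B) := d1.2.1.tail
      exact (List.isChain_append.mp (show List.Chain' (Adj G)
        ((m1 :: M') ++ (u :: B)) by simpa using t1)).2.1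
    rw [show A ++ u :: B = A ++ (u :: B) by simp]
    exact List.isChain_append.mpr ⟨d1.1, cuB, fun p hp v hv => by
      simp at hv; subst hv; exact d1.2.2 p hp u (by simp)⟩
  · -- Ok3
    intro a w b ht
    rw [show A ++ u :: B = A ++ ([u] ++ B) by simp] at ht
    rcases trip_append_iff.mp ht with hA | hQ | ⟨P', hP, Q', hQ⟩ | ⟨P', hP, Q', hQ⟩
    · exact h4 a w b (trip_append_iff.mpr (Or.inl hA))
    · rcases trip_cons_iff.mp (by simpa using hQ) with hB | ⟨rfl, B', hB⟩
      · obtain ⟨l₁, l₂, rfl⟩ := hB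
        exact h4 a w b ⟨A ++ u :: (m1 :: M') ++ u :: l₁, l₂, by simp⟩
      · subst hB
        exact h4 u w b ⟨A ++ u :: m1 :: M', B', by simp⟩
    · rw [List.singleton_append] at hQ
      injection hQ with e1 e2
      subst e1; subst e2
      exact h4 a w u ⟨P', m1 :: M' ++ u :: B, by rw [hP]; simp⟩
    · rw [List.singleton_append] at hQ
      injection hQ with e1 e2
      subst e1; subst e2
      -- the new triple (a, u, b) with a = last of A, B = b :: Q'
      have old1 : OkT G Z a u m1 := h4 a u m1 ⟨P', M' ++ u :: b :: Q', by rw [hP]; simp⟩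
      have hMd : (m1 :: M').dropLast ++ [(m1 :: M').getLast (by simp)] = m1 :: M' :=
        List.dropLast_append_getLast _
      set m2 := (m1 :: M').getLast (by simp) with hm2
      have old2 : OkT G Z m2 u b := h4 m2 u b
        ⟨A ++ u :: (m1 :: M').dropLast, Q', by (conv_lhs => rw [← hMd]); simp⟩
      constructor
      · rintro ⟨hpu, hbu⟩
        by_cases hdir : G m1 u
        · exact old1.1 ⟨hpu, hdir⟩
        · have hsuf3 : Ok3 G Z (u :: m1 :: (M' ++ u :: b :: Q')) :=
            ok3_append_right (P := A) (by simpa using h4)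
          have hum1 : G u m1 := by
            have hc : List.Chain' (Adj G) (u :: m1 :: (M' ++ u :: b :: Q')) := by
              simpa using hsufc
            exact ((List.isChain_cons_cons.mp hc).1).resolve_right hdir
          rcases run hG (M' ++ u :: b :: Q') u m1 hsuf3 (by simpa using hsufc) hum1 with
            h | h
          · exact h
          · exact absurd (chain_transGen h (by simp)) (hG u)
      · intro hncoll
        by_cases hpu : G a u
        · by_cases hbu : G b u
          · exact absurd ⟨hpu, hbu⟩ hncoll
          · exact old2.2 (fun hc => hbu hc.2)
        · exact old1.2 (fun hc => hpu hc.1)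


lemma exists_min_awalk {x y : V} (h : ∃ l, AWalk G Z x y l) :
    ∃ l, AWalk G Z x y l ∧ ∀ l', AWalk G Z x y l' → l.length ≤ l'.length := by
  classical
  have hp : ∃ n, ∃ l, AWalk G Z x y l ∧ l.length = n := ⟨h.choose.length, h.choose, h.choose_spec, rfl⟩
  obtain ⟨l, hl, hlen⟩ := Nat.find_spec hp
  exact ⟨l, hl, fun l' hl' => by rw [hlen]; exact Nat.find_min' hp ⟨l', hl', rfl⟩⟩

lemma not_blocked_of_ok3 {l : List V} (h : Ok3 G Z l) : ¬ Blocked G Z l := by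
  rintro ⟨a, w, b, l₁, l₂, rfl, hbad⟩
  have hok := h a w b ⟨l₁, l₂, rfl⟩
  rcases hbad with ⟨hnc, hw⟩ | ⟨hc, hall⟩
  · exact hok.2 hnc hw
  · obtain ⟨v, hv1, hv2⟩ := hok.1 hc
    exact hall v hv1 hv2

lemma ok3_of_not_blocked {l : List V} (h : ¬ Blocked G Z l) : Ok3 G Z l := by
  intro a w b ⟨l₁, l₂, heq⟩
  constructor
  · intro hc
    by_contra hno
    exact h ⟨a, w, b, l₁, l₂, heq, Or.inr ⟨hc, fun v hv hvZ => hno ⟨v, hv, hvZ⟩⟩⟩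
  · intro hnc hwZ
    exact h ⟨a, w, b, l₁, l₂, heq, Or.inl ⟨hnc, hwZ⟩⟩

lemma nodup_of_min (hG : IsDAG G) {x y : V} {l : List V} (hl : AWalk G Z x y l)
    (hmin : ∀ l', AWalk G Z x y l' → l.length ≤ l'.length) : l.Nodup := by
  by_contra h
  obtain ⟨A, u, M, B, rfl⟩ := not_nodup_decomp l h
  obtain ⟨l', hl', hlen⟩ := dup_shortcut hG hl
  exact absurd (hmin l' hl') (by omega)

lemma not_dsep_iff_awalk (hG : IsDAG G) {x y : V} :
    ¬ DSep G Z x y ↔ ∃ l, AWalk G Z x y l := by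
  constructor
  · intro h
    rw [DSep] at h
    push_neg at h
    obtain ⟨l, hp, hnb⟩ := h
    exact ⟨l, hp.1, hp.2.1, hp.2.2.1, ok3_of_not_blocked hnb⟩
  · intro h hd
    obtain ⟨l, hl, hmin⟩ := exists_min_awalk h
    have hnd := nodup_of_min hG hl hmin
    exact not_blocked_of_ok3 hl.2.2.2 (hd l ⟨hl.1, hl.2.1, hl.2.2.1, hnd⟩)

/-- generic middle-vertex removal surgery. -/
lemma mid_shortcut {x y a w b : V} {A B : List V}
    (hW : AWalk G Z x y (A ++ [a, w, b] ++ B)) (hab : Adj G a b)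
    (h2c : ∀ r Q', B = r :: Q' → OkT G Z a b r)
    (hb4 : ∀ p P', A = P' ++ [p] → OkT G Z p a b) :
    AWalk G Z x y (A ++ [a, b] ++ B) := by
  obtain ⟨h1, h2, h3, h4⟩ := hW
  refine ⟨?_, ?_, ?_, ?_⟩
  · rw [show A ++ [a, b] ++ B = A ++ a :: (b :: B) by simp]
    rw [head?_mid A a (b :: B) (w :: b :: B)]
    simpa using h1
  · rw [show A ++ [a, b] ++ B = (A ++ [a]) ++ (b :: B) by simp,
      getLast?_mid (B) b (A ++ [a]) (A ++ [a, w])]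
    rw [show (A ++ [a, w]) ++ (b :: B) = A ++ [a, w, b] ++ B by simp]
    exact h2
  · rw [show A ++ [a, w, b] ++ B = A ++ ([a, w, b] ++ B) by simp] at h3
    rw [show A ++ [a, b] ++ B = A ++ ([a, b] ++ B) by simp]
    simp only [List.Chain'] at h3 ⊢
    rw [List.isChain_append] at h3 ⊢
    obtain ⟨hA, hmid, hbd⟩ := h3
    refine ⟨hA, ?_, fun p hp v hv => hbd p hp v (by simpa using hv)⟩
    simp only [List.cons_append, List.isChain_cons_cons] at hmid ⊢
    exact ⟨hab, hmid.2.2⟩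
  · intro p q r ht
    rw [show A ++ [a, b] ++ B = A ++ ([a, b] ++ B) by simp] at ht
    rcases trip_append_iff.mp ht with hA | hQ | ⟨P', hP, Q', hQ⟩ | ⟨P', hP, Q', hQ⟩
    · obtain ⟨l₁, l₂, hA⟩ := hA
      exact h4 p q r ⟨l₁, l₂ ++ [a, w, b] ++ B, by rw [hA]; simp⟩
    · rcases trip_append_iff.mp hQ with hM | hB | ⟨P2, hP2, Q2, hQ2⟩ | ⟨P2, hP2, Q2, hQ2⟩
      · exact absurd (trip_length hM) (by simp)
      · obtain ⟨l₁, l₂, rfl⟩ := hB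
        exact h4 p q r ⟨A ++ [a, w, b] ++ l₁, l₂, by simp⟩
      · -- [a,b] = P2 ++ [p,q], B = r :: Q2
        have hP0 : P2 = [] := by
          have hlen := congrArg List.length hP2
          simp only [List.length_cons, List.length_append, List.length_nil] at hlen
          exact List.eq_nil_of_length_eq_zero (by omega)
        subst hP0
        simp at hP2
        obtain ⟨rfl, rfl⟩ := hP2
        exact h2c r Q2 hQ2
      · -- [a,b] = P2 ++ [p] : P2 = [a], p = b : triple (b, B0, B1)
        rcases P2 with _ | ⟨z, P3⟩
        · exfalso
          have hlen := congrArg List.length hP2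
          simp at hlen
        · have hP3 : P3 = [] := by
            have hlen := congrArg List.length hP2
            simp only [List.length_cons, List.length_append, List.length_nil] at hlen
            exact List.eq_nil_of_length_eq_zero (by omega)
          subst hP3
          simp at hP2
          obtain ⟨rfl, rfl⟩ := hP2
          exact h4 b q r ⟨A ++ [a, w], Q2, by rw [hQ2]; simp⟩
    · -- A = P' ++ [p, q], head ([a,b]++B) = r, so r = a
      have hr : a = r := by
        have h5 := hQ
        simp at h5
        exact h5.1
      subst hr
      exact h4 p q a ⟨P', [w, b] ++ B, by rw [hP]; simp⟩
    · -- A = P' ++ [p], [a,b]++B = q :: r :: Q' : q = a, r = b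
      rw [show ([a, b] ++ B : List V) = a :: b :: B by simp] at hQ
      injection hQ with e1 hQ
      injection hQ with e2 e3
      subst e1; subst e2
      exact hb4 p P' hP

/-- Case 1 flip removal : `(a,w,b)` is a collider in `G` but not in `G'`. -/
lemma case1_short (hG : IsDAG G) {x y a w b : V} {A B : List V}
    (hW : AWalk G Z x y (A ++ [a, w, b] ++ B)) (hab : Adj G a b)
    (haw : G a w) (hbw : G b w) :
    ∃ l', AWalk G Z x y l' ∧ l'.length < (A ++ [a, w, b] ++ B).length := by
  have hAnZ : AnZ G Z w := (hW.2.2.2 a w b ⟨A, B, rfl⟩).1 ⟨haw, hbw⟩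
  refine ⟨A ++ [a, b] ++ B, mid_shortcut hW hab ?_ ?_, by simp⟩
  · intro r Q' hB
    subst hB
    have old : OkT G Z w b r := hW.2.2.2 w b r ⟨A ++ [a], Q', by simp⟩
    constructor
    · rintro ⟨-, -⟩; exact anZ_step hbw hAnZ
    · intro _; exact old.2 (fun hc => (hG.not2 hbw) hc.1)
  · intro p P' hA
    subst hA
    have old : OkT G Z p a w := hW.2.2.2 p a w ⟨P', [b] ++ B, by simp⟩
    constructor
    · rintro ⟨-, -⟩; exact anZ_step haw hAnZ
    · intro _; exact old.2 (fun hc => (hG.not2 haw) hc.2)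

/-- Case 2 flip removal : `(a,w,b)` is a collider in `G'` but not in `G`,
with the `G`-edge between `a` and `w` pointing `w → a`. -/
lemma case2_short (hG : IsDAG G) (hG' : IsDAG G') {x y a w b : V} {A B : List V}
    (hW : AWalk G Z x y (A ++ [a, w, b] ++ B)) (hab : Adj G a b)
    (hwa : G w a) (hG'aw : G' a w) (hG'bw : G' b w)
    (hnoC1 : ∀ p q r, Trip (A ++ [a, w, b] ++ B) p q r →
      Collider G p q r → Collider G' p q r) :
    ∃ l', AWalk G Z x y l' ∧ l'.length < (A ++ [a, w, b] ++ B).length := by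
  have hwb : Adj G w b := by
    have hc : List.Chain' (Adj G) [a, w, b] := hW.2.2.1.infix ⟨A, B, by simp⟩
    exact (List.isChain_cons_cons.mp (List.isChain_cons_cons.mp hc).2).1
  refine ⟨A ++ [a, b] ++ B, mid_shortcut hW hab ?_ ?_, by simp⟩
  · intro r Q' hB
    subst hB
    have old : OkT G Z w b r := hW.2.2.2 w b r ⟨A ++ [a], Q', by simp⟩
    constructor
    · rintro ⟨hab', hrb⟩
      rcases hwb with hwb' | hbw'
      · exact absurd (hnoC1 w b r ⟨A ++ [a], Q', by simp⟩ ⟨hwb', hrb⟩).1 (hG'.not2 hG'bw)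
      · exact absurd hwa (hG.not3 hab' hbw')
    · intro hnc
      by_cases hrb : G r b
      · rcases hwb with hwb' | hbw'
        · exact absurd (hnoC1 w b r ⟨A ++ [a], Q', by simp⟩ ⟨hwb', hrb⟩).1 (hG'.not2 hG'bw)
        · exact old.2 (fun hc => (hG.not2 hbw') hc.1)
      · exact old.2 (fun hc => hrb hc.2)
  · intro p P' hA
    subst hA
    have old : OkT G Z p a w := hW.2.2.2 p a w ⟨P', [b] ++ B, by simp⟩
    have hpa : ¬ G p a := by
      intro hpa'
      exact hG'.not2 hG'aw (hnoC1 p a w ⟨P', [b] ++ B, by simp⟩ ⟨hpa', hwa⟩).2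
    constructor
    · rintro ⟨hpa', -⟩; exact absurd hpa' hpa
    · intro _; exact old.2 (fun hc => hpa hc.1)

lemma nodup_triple_ne {x y p q r : V} {l₁ l₂ : List V} {l : List V}
    (hl : AWalk G Z x y l) (hmin : ∀ l', AWalk G Z x y l' → l.length ≤ l'.length)
    (hG : IsDAG G) (heq : l = l₁ ++ [p, q, r] ++ l₂) : p ≠ r := by
  have hnd : l.Nodup := nodup_of_min hG hl hmin
  rw [heq] at hnd
  have hinf : ([p, q, r] : List V) <:+: (l₁ ++ [p, q, r] ++ l₂) := ⟨l₁, l₂, by simp⟩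
  have : ([p, q, r] : List V).Nodup := hnd.sublist hinf.sublist
  simp at this
  exact this.1.2

/-- on a minimal active walk, every triple has the same collider status in `G` and `G'`. -/
lemma noflip (hG : IsDAG G) (hG' : IsDAG G')
    (hskel : ∀ x y, Adj G x y ↔ Adj G' x y)
    (hv : ∀ a b c, VStruct G a b c ↔ VStruct G' a b c)
    {x y : V} {l : List V} (hl : AWalk G Z x y l)
    (hmin : ∀ l', AWalk G Z x y l' → l.length ≤ l'.length) :
    ∀ a w b, Trip l a w b → (Collider G a w b ↔ Collider G' a w b) := by
  have hnoC1 : ∀ p q r, Trip l p q r → Collider G p q r → Collider G' p q r := by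
    intro p q r ht hc
    by_contra hnc'
    obtain ⟨l₁, l₂, heq⟩ := ht
    have hpr : p ≠ r := nodup_triple_ne hl hmin hG heq
    have hadj : Adj G p r := by
      by_contra hna
      have hvs : VStruct G p q r := ⟨hc.1, hc.2, hpr, hna⟩
      have hvs' := (hv p q r).mp hvs
      exact hnc' ⟨hvs'.1, hvs'.2.1⟩
    subst heq
    obtain ⟨l', hl', hlen⟩ := case1_short hG hl hadj hc.1 hc.2
    exact absurd (hmin l' hl') (by omega)
  intro a w b ht
  refine ⟨fun hc => hnoC1 a w b ht hc, fun hc' => ?_⟩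
  by_contra hnc
  obtain ⟨l₁, l₂, heq⟩ := ht
  have hab : a ≠ b := nodup_triple_ne hl hmin hG heq
  have hadj : Adj G a b := by
    by_contra hna
    have hvs' : VStruct G' a w b := ⟨hc'.1, hc'.2, hab, fun h => hna ((hskel a b).mpr h)⟩
    have hvs := (hv a w b).mpr hvs'
    exact hnc ⟨hvs.1, hvs.2.1⟩
  have hchmid : List.Chain' (Adj G) [a, w, b] := by
    subst heq
    exact hl.2.2.1.infix ⟨l₁, l₂, by simp⟩
  have hAdjaw : Adj G a w := (List.isChain_cons_cons.mp hchmid).1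
  have hAdjwb : Adj G w b := (List.isChain_cons_cons.mp (List.isChain_cons_cons.mp hchmid).2).1
  by_cases haw : G a w
  · -- then ¬ G b w, so G w b ; use the reversed walk
    have hbw : ¬ G b w := fun h => hnc ⟨haw, h⟩
    have hwb : G w b := hAdjwb.resolve_right hbw
    have hWrev : AWalk G Z y x (l₂.reverse ++ [b, w, a] ++ l₁.reverse) := by
      have h0 := awalk_reverse hl
      rw [heq, show (l₁ ++ [a, w, b] ++ l₂).reverse
        = l₂.reverse ++ [b, w, a] ++ l₁.reverse by simp] at h0
      exact h0
    have hnoC1rev : ∀ p q r, Trip (l₂.reverse ++ [b, w, a] ++ l₁.reverse) p q r →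
        Collider G p q r → Collider G' p q r := by
      intro p q r ht2 hcpl
      have h1 := trip_reverse_of ht2
      rw [show (l₂.reverse ++ [b, w, a] ++ l₁.reverse).reverse
        = l₁ ++ [a, w, b] ++ l₂ by simp, ← heq] at h1
      have h2 := hnoC1 r q p h1 ⟨hcpl.2, hcpl.1⟩
      exact ⟨h2.2, h2.1⟩
    obtain ⟨l', hl', hlen⟩ := case2_short hG hG' hWrev hadj.symm hwb hc'.2 hc'.1 hnoC1rev
    have hl'' := awalk_reverse hl'
    have hlrev : (l₂.reverse ++ [b, w, a] ++ l₁.reverse).length = l.length := by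
      rw [heq]; simp; omega
    have := hmin l'.reverse hl''
    rw [List.length_reverse] at this
    omega
  · have hwa : G w a := hAdjaw.resolve_left haw
    subst heq
    obtain ⟨l', hl', hlen⟩ := case2_short hG hG' hl hadj hwa hc'.1 hc'.2
      (fun p q r ht2 hcol => hnoC1 p q r ht2 hcol)
    exact absurd (hmin l' hl') (by omega)


lemma anZ_of_chain {w : V} {L : List V} (hch : List.Chain G w L)
    (hlast : (w :: L).getLast (List.cons_ne_nil _ _) ∈ Z) : AnZ G Z w :=
  ⟨(w :: L).getLast (List.cons_ne_nil _ _),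
    List.relationReflTransGen_of_exists_isChain_cons L hch rfl, hlast⟩

lemma exists_min_chainZ {w : V} (h : AnZ G Z w) :
    ∃ L, List.Chain G w L ∧ (w :: L).getLast (List.cons_ne_nil _ _) ∈ Z ∧
      ∀ L', L'.length < L.length → List.Chain G w L' →
        (w :: L').getLast (List.cons_ne_nil _ _) ∉ Z := by
  classical
  obtain ⟨v, hrt, hvZ⟩ := h
  obtain ⟨L0, hch0, hlast0⟩ := List.exists_isChain_cons_of_relationReflTransGen hrt
  have hp : ∃ n, ∃ L : List V, (List.Chain G w L ∧
      (w :: L).getLast (List.cons_ne_nil _ _) ∈ Z) ∧ L.length = n :=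
    ⟨L0.length, L0, ⟨hch0, by rw [hlast0]; exact hvZ⟩, rfl⟩
  obtain ⟨L, ⟨hch, hlast⟩, hlen⟩ := Nat.find_spec hp
  refine ⟨L, hch, hlast, fun L' hlt hch' hin => ?_⟩
  exact Nat.find_min hp (show L'.length < Nat.find hp by omega) ⟨L', ⟨hch', hin⟩, rfl⟩

/-- key ancestor lemma: given a minimal directed `G`-path from `w` into `Z`,
either `w` is a `G'`-ancestor of `Z`, or the first edge of the path is reversed
in `G'`. -/
lemma anc (hG : IsDAG G) (hskel : ∀ x y, Adj G x y ↔ Adj G' x y)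
    (hv : ∀ a b c, VStruct G a b c ↔ VStruct G' a b c) :
    ∀ (L : List V) (w : V), List.Chain G w L →
    (w :: L).getLast (List.cons_ne_nil _ _) ∈ Z →
    (∀ L', L'.length < L.length → List.Chain G w L' →
      (w :: L').getLast (List.cons_ne_nil _ _) ∉ Z) →
    AnZ G' Z w ∨ ∃ v1 L1, L = v1 :: L1 ∧ G' v1 w := by
  intro L
  induction L with
  | nil =>
    intro w _ hlast _
    exact Or.inl ⟨w, Relation.ReflTransGen.refl, by simpa using hlast⟩
  | cons v1 L1 ih =>
    intro w hch hlast hmin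
    rw [show List.Chain G w (v1 :: L1) ↔ G w v1 ∧ List.Chain G v1 L1 from List.isChain_cons_cons] at hch
    obtain ⟨hwv1, hch1⟩ := hch
    by_cases hG'wv1 : G' w v1
    · -- recurse at v1
      have hlast1 : (v1 :: L1).getLast (List.cons_ne_nil _ _) ∈ Z := by
        rwa [List.getLast_cons (List.cons_ne_nil _ _)] at hlast
      have hmin1 : ∀ L', L'.length < L1.length → List.Chain G v1 L' →
          (v1 :: L').getLast (List.cons_ne_nil _ _) ∉ Z := by
        intro L' hlt hch' hin
        refine hmin (v1 :: L') (by simp; omega) (List.isChain_cons_cons.mpr ⟨hwv1, hch'⟩) ?_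
        rwa [List.getLast_cons (List.cons_ne_nil _ _)]
      rcases ih v1 hch1 hlast1 hmin1 with h | ⟨v2, L2, rfl, hG'v2v1⟩
      · exact Or.inl ⟨h.choose, Relation.ReflTransGen.head hG'wv1 h.choose_spec.1,
          h.choose_spec.2⟩
      · exfalso
        rw [show List.Chain G v1 (v2 :: L2) ↔ G v1 v2 ∧ List.Chain G v2 L2 from List.isChain_cons_cons] at hch1
        obtain ⟨hv1v2, hch2⟩ := hch1
        have hne : w ≠ v2 := by
          rintro rfl
          exact hG.not2 hwv1 hv1v2
        have hadj : Adj G w v2 := by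
          by_contra hna
          have hvs' : VStruct G' w v1 v2 :=
            ⟨hG'wv1, hG'v2v1, hne, fun h => hna ((hskel w v2).mpr h)⟩
          have hvs := (hv w v1 v2).mpr hvs'
          exact hG.not2 hv1v2 hvs.2.1
        rcases hadj with hwv2 | hv2w
        · -- the shortcut contradicts minimality
          refine hmin (v2 :: L2) (by simp) (List.isChain_cons_cons.mpr ⟨hwv2, hch2⟩) ?_
          rw [List.getLast_cons (List.cons_ne_nil _ _)]
          rw [List.getLast_cons (List.cons_ne_nil _ _),
            List.getLast_cons (List.cons_ne_nil _ _)] at hlast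
          exact hlast
        · exact hG.not3 hwv1 hv1v2 hv2w
    · exact Or.inr ⟨v1, L1, rfl,
        ((hskel w v1).mp (Or.inl hwv1)).resolve_left hG'wv1⟩

/-- middle-vertex replacement surgery. -/
lemma mid_subst {x y a w w' b : V} {A B : List V}
    (hW : AWalk G Z x y (A ++ [a, w, b] ++ B))
    (haw' : Adj G a w') (hw'b : Adj G w' b)
    (hmid : OkT G Z a w' b)
    (h2c : ∀ r Q', B = r :: Q' → OkT G Z w' b r)
    (hb4 : ∀ p P', A = P' ++ [p] → OkT G Z p a w') :
    AWalk G Z x y (A ++ [a, w', b] ++ B) := by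
  obtain ⟨h1, h2, h3, h4⟩ := hW
  refine ⟨?_, ?_, ?_, ?_⟩
  · rw [show A ++ [a, w', b] ++ B = A ++ a :: (w' :: b :: B) by simp]
    rw [head?_mid A a (w' :: b :: B) (w :: b :: B)]
    simpa using h1
  · rw [show A ++ [a, w', b] ++ B = (A ++ [a, w']) ++ (b :: B) by simp,
      getLast?_mid (B) b (A ++ [a, w']) (A ++ [a, w])]
    rw [show (A ++ [a, w]) ++ (b :: B) = A ++ [a, w, b] ++ B by simp]
    exact h2
  · rw [show A ++ [a, w, b] ++ B = A ++ ([a, w, b] ++ B) by simp] at h3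
    rw [show A ++ [a, w', b] ++ B = A ++ ([a, w', b] ++ B) by simp]
    simp only [List.Chain'] at h3 ⊢
    rw [List.isChain_append] at h3 ⊢
    obtain ⟨hA, hmid2, hbd⟩ := h3
    refine ⟨hA, ?_, fun p hp v hv => hbd p hp v (by simpa using hv)⟩
    simp only [List.cons_append, List.isChain_cons_cons] at hmid2 ⊢
    exact ⟨haw', hw'b, hmid2.2.2⟩
  · intro p q r ht
    rw [show A ++ [a, w', b] ++ B = A ++ ([a, w', b] ++ B) by simp] at ht
    rcases trip_append_iff.mp ht with hA | hQ | ⟨P', hP, Q', hQ⟩ | ⟨P', hP, Q', hQ⟩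
    · obtain ⟨l₁, l₂, hA⟩ := hA
      exact h4 p q r ⟨l₁, l₂ ++ [a, w, b] ++ B, by rw [hA]; simp⟩
    · rcases trip_append_iff.mp hQ with hM | hB | ⟨P2, hP2, Q2, hQ2⟩ | ⟨P2, hP2, Q2, hQ2⟩
      · obtain ⟨rfl, rfl, rfl⟩ := trip_triple_iff.mp hM
        exact hmid
      · obtain ⟨l₁, l₂, rfl⟩ := hB
        exact h4 p q r ⟨A ++ [a, w, b] ++ l₁, l₂, by simp⟩
      · -- [a,w',b] = P2 ++ [p,q], B = r :: Q2 : P2 = [a], p = w', q = b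
        rcases P2 with _ | ⟨z, P3⟩
        · exfalso
          have hlen := congrArg List.length hP2
          simp only [List.length_cons, List.length_append, List.length_nil] at hlen
          omega
        · have hP3 : P3 = [] := by
            have hlen := congrArg List.length hP2
            simp only [List.length_cons, List.length_append, List.length_nil] at hlen
            exact List.eq_nil_of_length_eq_zero (by omega)
          subst hP3
          simp at hP2
          obtain ⟨rfl, rfl, rfl⟩ := hP2
          exact h2c r Q2 hQ2
      · -- [a,w',b] = P2 ++ [p] : P2 = [a,w'], p = b : triple (b, B0, B1)
        have hlen := congrArg List.length hP2
        simp only [List.length_cons, List.length_append, List.length_nil] at hlen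
        rcases P2 with _ | ⟨z1, _ | ⟨z2, _ | ⟨z3, P5⟩⟩⟩
        · exfalso; simp only [List.length_cons, List.length_nil] at hlen; omega
        · exfalso; simp only [List.length_cons, List.length_nil] at hlen; omega
        · simp at hP2
          obtain ⟨rfl, rfl, rfl⟩ := hP2
          exact h4 b q r ⟨A ++ [a, w], Q2, by rw [hQ2]; simp⟩
        · exfalso; simp only [List.length_cons, List.length_nil] at hlen; omega
    · -- A = P' ++ [p, q], r = a
      have hr : a = r := by
        have h5 := hQ
        simp at h5
        exact h5.1
      subst hr
      exact h4 p q a ⟨P', [w, b] ++ B, by rw [hP]; simp⟩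
    · -- A = P' ++ [p], q = a, r = w'
      rw [show ([a, w', b] ++ B : List V) = a :: w' :: (b :: B) by simp] at hQ
      injection hQ with e1 hQ
      injection hQ with e2 e3
      subst e1; subst e2
      exact hb4 p P' hP


lemma suffix_split {X Y U W : List V} (h : X ++ Y = U ++ W) (hlen : W.length ≤ Y.length) :
    ∃ C, Y = C ++ W ∧ U = X ++ C := by
  rcases List.append_eq_append_iff.mp h with ⟨a', ha1, ha2⟩ | ⟨c', hc1, hc2⟩
  · exact ⟨a', ha2, ha1⟩
  · have : c' = [] := by
      have h1 := congrArg List.length hc2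
      simp only [List.length_append] at h1
      exact List.eq_nil_of_length_eq_zero (by omega)
    subst this
    exact ⟨[], by simpa using hc2.symm, by simpa using hc1.symm⟩

lemma subst_collider (hG : IsDAG G) (hG' : IsDAG G')
    (hskel : ∀ x y, Adj G x y ↔ Adj G' x y)
    (hv : ∀ a b c, VStruct G a b c ↔ VStruct G' a b c) {x y : V} :
    ∀ (k : ℕ) (w a b : V) (A B : List V),
    AWalk G Z x y (A ++ [a, w, b] ++ B) →
    (∀ l', AWalk G Z x y l' → (A ++ [a, w, b] ++ B).length ≤ l'.length) →
    G a w → G b w →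
    (∃ L : List V, List.Chain G w L ∧
      (w :: L).getLast (List.cons_ne_nil _ _) ∈ Z ∧ L.length ≤ k) →
    ∃ w', AWalk G Z x y (A ++ [a, w', b] ++ B) ∧ G a w' ∧ G b w' ∧ AnZ G' Z w' := by
  intro k
  induction k with
  | zero =>
    rintro w a b A B hW hmin haw hbw ⟨L, hch, hlast, hlen⟩
    have hL : L = [] := List.eq_nil_of_length_eq_zero (by omega)
    subst hL
    exact ⟨w, hW, haw, hbw, ⟨w, Relation.ReflTransGen.refl, by simpa using hlast⟩⟩
  | succ k ih =>
    rintro w a b A B hW hmin haw hbw ⟨L, hch, hlast, hlen⟩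
    by_cases hAn' : AnZ G' Z w
    · exact ⟨w, hW, haw, hbw, hAn'⟩
    have hAnG : AnZ G Z w := anZ_of_chain hch hlast
    obtain ⟨Lm, hchm, hlastm, hminm⟩ := exists_min_chainZ hAnG
    have hLmlen : Lm.length ≤ L.length := by
      by_contra h
      push_neg at h
      exact hminm L (by omega) hch hlast
    rcases anc hG hskel hv Lm w hchm hlastm hminm with h | ⟨v1, L1, rfl, hG'v1w⟩
    · exact absurd h hAn'
    rw [show List.Chain G w (v1 :: L1) ↔ G w v1 ∧ List.Chain G v1 L1 from List.isChain_cons_cons] at hchm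
    obtain ⟨hwv1, hch1⟩ := hchm
    have hcol' : Collider G' a w b :=
      (noflip hG hG' hskel hv hW hmin a w b ⟨A, B, rfl⟩).mp ⟨haw, hbw⟩
    have hav1 : G a v1 := by
      have hne : a ≠ v1 := by rintro rfl; exact hG.not2 haw hwv1
      have hadj : Adj G a v1 := by
        by_contra hna
        have hvs' : VStruct G' a w v1 :=
          ⟨hcol'.1, hG'v1w, hne, fun h => hna ((hskel a v1).mpr h)⟩
        exact hG.not2 hwv1 ((hv a w v1).mpr hvs').2.1
      exact hadj.resolve_right (fun h => hG.not3 haw hwv1 h)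
    have hbv1 : G b v1 := by
      have hne : b ≠ v1 := by rintro rfl; exact hG.not2 hbw hwv1
      have hadj : Adj G b v1 := by
        by_contra hna
        have hvs' : VStruct G' b w v1 :=
          ⟨hcol'.2, hG'v1w, hne, fun h => hna ((hskel b v1).mpr h)⟩
        exact hG.not2 hwv1 ((hv b w v1).mpr hvs').2.1
      exact hadj.resolve_right (fun h => hG.not3 hbw hwv1 h)
    have hlast1 : (v1 :: L1).getLast (List.cons_ne_nil _ _) ∈ Z := by
      rwa [List.getLast_cons (List.cons_ne_nil _ _)] at hlastm
    have hAnv1 : AnZ G Z v1 := anZ_of_chain hch1 hlast1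
    have hmid : OkT G Z a v1 b := ⟨fun _ => hAnv1, fun hnc => absurd ⟨hav1, hbv1⟩ hnc⟩
    have hW1 : AWalk G Z x y (A ++ [a, v1, b] ++ B) := by
      refine mid_subst hW (Or.inl hav1) (Or.inr hbv1) hmid ?_ ?_
      · intro r Q' hB
        subst hB
        have old : OkT G Z w b r := hW.2.2.2 w b r ⟨A ++ [a], Q', by simp⟩
        exact ⟨fun hc => absurd hc.1 (hG.not2 hbv1),
          fun _ => old.2 (fun hc => (hG.not2 hbw) hc.1)⟩
      · intro p P' hA
        subst hA
        have old : OkT G Z p a w := hW.2.2.2 p a w ⟨P', [b] ++ B, by simp⟩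
        exact ⟨fun hc => absurd hc.2 (hG.not2 hav1),
          fun _ => old.2 (fun hc => (hG.not2 haw) hc.2)⟩
    have hmin1 : ∀ l', AWalk G Z x y l' → (A ++ [a, v1, b] ++ B).length ≤ l'.length := by
      intro l' hl'
      have h5 := hmin l' hl'
      simp only [List.length_append, List.length_cons] at h5 ⊢
      omega
    refine ih v1 a b A B hW1 hmin1 hav1 hbv1 ⟨L1, hch1, hlast1, ?_⟩
    simp only [List.length_cons] at hLmlen
    omega

lemma goodify (hG : IsDAG G) (hG' : IsDAG G')
    (hskel : ∀ x y, Adj G x y ↔ Adj G' x y)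
    (hv : ∀ a b c, VStruct G a b c ↔ VStruct G' a b c) {x y : V} :
    ∀ (n : ℕ) (l : List V), AWalk G Z x y l →
    (∀ l', AWalk G Z x y l' → l.length ≤ l'.length) →
    (∀ A p q r B, l = A ++ [p, q, r] ++ B → Collider G p q r → ¬ AnZ G' Z q →
      B.length < n) →
    ∃ l', AWalk G Z x y l' ∧ (∀ l'', AWalk G Z x y l'' → l'.length ≤ l''.length) ∧
      (∀ A p q r B, l' = A ++ [p, q, r] ++ B → Collider G p q r → AnZ G' Z q) := by
  intro n
  induction n with
  | zero =>
    intro l hW hmin hbound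
    refine ⟨l, hW, hmin, fun A p q r B heq hc => ?_⟩
    by_contra h
    exact absurd (hbound A p q r B heq hc h) (by omega)
  | succ n ih =>
    intro l hW hmin hbound
    by_cases hbad : ∃ A p q r B, l = A ++ [p, q, r] ++ B ∧ Collider G p q r ∧
        ¬ AnZ G' Z q ∧ B.length = n
    · obtain ⟨A, p, q, r, B, heq, hc, hnot, hBl⟩ := hbad
      subst heq
      have hAnG : AnZ G Z q := (hW.2.2.2 p q r ⟨A, B, rfl⟩).1 hc
      obtain ⟨v, hrt, hvZ⟩ := hAnG
      obtain ⟨L0, hch0, hlast0⟩ := List.exists_isChain_cons_of_relationReflTransGen hrt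
      obtain ⟨w', hW', haw', hbw', hAn'⟩ := subst_collider hG hG' hskel hv
        L0.length q p r A B hW hmin hc.1 hc.2 ⟨L0, hch0, by rw [hlast0]; exact hvZ, le_refl _⟩
      have hmin' : ∀ l', AWalk G Z x y l' → (A ++ [p, w', r] ++ B).length ≤ l'.length := by
        intro l' hl'
        have h5 := hmin l' hl'
        simp only [List.length_append, List.length_cons] at h5 ⊢
        omega
      refine ih (A ++ [p, w', r] ++ B) hW' hmin' ?_
      intro A2 p2 q2 r2 B2 heq2 hc2 hn2
      by_contra hge
      push_neg at hge
      -- split off the common suffix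
      rw [show A2 ++ [p2, q2, r2] ++ B2 = A2 ++ ([p2, q2, r2] ++ B2) by simp,
        show A ++ [p, w', r] ++ B = A ++ ([p, w', r] ++ B) by simp] at heq2
      obtain ⟨C, hC1, hC2⟩ := suffix_split heq2.symm (by
        simp only [List.length_append, List.length_cons, List.length_nil]
        omega)
      rcases C with _ | ⟨c1, _ | ⟨c2, _ | ⟨c3, C'⟩⟩⟩
      · -- same position : q2 = w' which is in An'(Z)
        simp only [List.cons_append, List.nil_append] at hC1
        injection hC1 with e1 hC1
        injection hC1 with e2 hC1
        rw [e2] at hn2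
        exact hn2 hAn'
      · -- one to the left : triple (p2, p, w') is not a collider
        simp only [List.cons_append, List.nil_append] at hC1
        injection hC1 with e1 hC1
        injection hC1 with e2 hC1
        injection hC1 with e3 hC1
        have h6 := hc2.2
        rw [e2, e3] at h6
        exact hG.not2 haw' h6
      · -- two to the left : same triple as in the old walk, good there
        simp only [List.cons_append, List.nil_append] at hC1
        injection hC1 with e1 hC1
        injection hC1 with e2 hC1
        injection hC1 with e3 hC1
        have hc2' := hc2
        rw [e1, e2, e3] at hc2'
        rw [e2] at hn2
        have hb := hbound A2 c1 c2 p (q :: r :: B) (by rw [hC2]; simp) hc2' hn2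
        simp only [List.length_cons] at hb
        omega
      · -- three or more to the left : same triple as in the old walk
        simp only [List.cons_append, List.nil_append] at hC1
        injection hC1 with e1 hC1
        injection hC1 with e2 hC1
        injection hC1 with e3 hC1
        have hc2' := hc2
        rw [e1, e2, e3] at hc2'
        rw [e2] at hn2
        have hb := hbound A2 c1 c2 c3 (C' ++ [p, q, r] ++ B) (by rw [hC2]; simp) hc2' hn2
        simp only [List.length_append, List.length_cons, List.length_nil] at hb
        omega
    · refine ih l hW hmin ?_
      intro A p q r B heq hc hnot
      have h5 := hbound A p q r B heq hc hnot
      have hne : B.length ≠ n := fun h => hbad ⟨A, p, q, r, B, heq, hc, hnot, h⟩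
      omega

/-- the main transfer lemma. -/
lemma transfer (hG : IsDAG G) (hG' : IsDAG G')
    (hskel : ∀ x y, Adj G x y ↔ Adj G' x y)
    (hv : ∀ a b c, VStruct G a b c ↔ VStruct G' a b c) {x y : V}
    (h : ∃ l, AWalk G Z x y l) : ∃ l, AWalk G' Z x y l := by
  obtain ⟨l0, hW0, hmin0⟩ := exists_min_awalk h
  obtain ⟨l, hW, hmin, hgood⟩ := goodify hG hG' hskel hv (l0.length + 1) l0 hW0 hmin0
    (fun A p q r B heq _ _ => by
      have h5 := congrArg List.length heq
      simp only [List.length_append, List.length_cons, List.length_nil] at h5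
      omega)
  refine ⟨l, hW.1, hW.2.1, ?_, ?_⟩
  · exact hW.2.2.1.imp (fun {a b} hab => (hskel a b).mp hab)
  · intro p q r ht
    obtain ⟨A, B, heq⟩ := ht
    have hflip := noflip hG hG' hskel hv hW hmin p q r ⟨A, B, heq⟩
    have hold := hW.2.2.2 p q r ⟨A, B, heq⟩
    constructor
    · intro hc'
      exact hgood A p q r B heq (hflip.mpr hc')
    · intro hnc' hqZ
      exact hold.2 (fun hc => hnc' (hflip.mp hc)) hqZ


end Aux

/-- The Verma–Pearl theorem: two DAGs with the same skeleton and the same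
v-structures are Markov equivalent, i.e. their d-separation relations coincide. -/
theorem stmt10 (G G' : V → V → Prop) (hG : IsDAG G) (hG' : IsDAG G')
    (hskel : ∀ x y, Adj G x y ↔ Adj G' x y)
    (hv : ∀ a b c, VStruct G a b c ↔ VStruct G' a b c) :
    ∀ (Z : Set V) (x y : V), DSep G Z x y ↔ DSep G' Z x y := by
  intro Z x y
  constructor
  · intro hD
    by_contra hD'
    have hex' := (not_dsep_iff_awalk (G := G') (Z := Z) hG').mp hD'
    have hex := transfer (G := G') (G' := G) hG' hG (fun a b => (hskel a b).symm)
      (fun a b c => (hv a b c).symm) hex'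
    exact (not_dsep_iff_awalk hG).mpr hex hD
  · intro hD
    by_contra hD'
    have hex' := (not_dsep_iff_awalk (G := G) (Z := Z) hG).mp hD'
    have hex := transfer hG hG' hskel hv hex'
    exact (not_dsep_iff_awalk hG').mpr hex hD

end Stmt10
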